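/- For all integers 0 ≤ k ≤ n, the number of pairs (D, S), where D is a Dyck word of semi-length n+1 and S is a set of k up-steps of D none of which is at ground level, equals B_{n,k}. Equivalently, Σ_D binom(u(D), k) = B_{n,k}, the sum being over all Dyck words D of semi-length n+1, where u(D) is the number of up-steps of D not at ground level. -/

import Mathlib

/-- Catalan's triangle: `C_{n,k} = ((n-k+1)/(n+1)) * binom(n+k, n)` (the division is exact). -/
def catalanTriangle (n k : ℕ) : ℕ := (n - k + 1) * (n + k).choose n / (n + 1)

/-- Borel's triangle: `B_{n,k} = Σ_{s=k}^{n} binom(s,k) * C_{n,s}`. -/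
def borelTriangle (n k : ℕ) : ℕ := ∑ s ∈ Finset.Icc k n, s.choose k * catalanTriangle n s

/-- A Dyck word of semi-length `m`: a word in `U = true` and `D = false` of length `2m` with
`m` `U`'s and `m` `D`'s such that every prefix has at least as many `U`'s as `D`'s. -/
def IsDyckWord (m : ℕ) (w : List Bool) : Prop :=
  w.length = 2 * m ∧ w.count true = m ∧ w.count false = m ∧
    ∀ i, (w.take i).count false ≤ (w.take i).count true

/-- The positions of the up-steps of `w` that are not at ground level. -/
def upStepsNotAtGround (w : List Bool) : Finset ℕ :=
  (Finset.range w.length).filter fun i =>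
    w.getD i false = true ∧ (w.take i).count true ≠ (w.take i).count false

lemma card_upPos (w : List Bool) :
    ((Finset.range w.length).filter (fun i => w.getD i false = true)).card = w.count true := by
  induction w using List.reverseRecOn with
  | nil => simp
  | append_singleton l b ih =>
    rw [List.length_append, List.length_singleton, Finset.range_add_one, Finset.filter_insert]
    have hfeq : (Finset.range l.length).filter (fun i => (l ++ [b]).getD i false = true)
        = (Finset.range l.length).filter (fun i => l.getD i false = true) := by
      apply Finset.filter_congr
      intro i hi
      rw [Finset.mem_range] at hi
      rw [List.getD_append _ _ _ _ hi]
    have hD : (l ++ [b]).getD l.length false = b := by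
      rw [List.getD_append_right _ _ _ _ le_rfl]
      simp
    rw [hD, List.count_append]
    by_cases hb : b = true
    · subst hb
      rw [if_pos rfl, Finset.card_insert_of_notMem (by simp), hfeq, ih]
      simp
    · simp only [Bool.not_eq_true] at hb
      subst hb
      rw [if_neg (by simp), hfeq, ih]
      simp

lemma take_append_count (x y : List Bool) (i : ℕ) (b : Bool) :
    ((x ++ y).take i).count b = (x.take i).count b + (y.take (i - x.length)).count b := by
  rw [List.take_append, List.count_append]

lemma up_append (x y : List Bool) (hx : x.count true = x.count false) :
    upStepsNotAtGround (x ++ y)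
      = upStepsNotAtGround x ∪ (upStepsNotAtGround y).image (· + x.length) := by
  ext i
  simp only [upStepsNotAtGround, Finset.mem_union, Finset.mem_image, Finset.mem_filter,
    Finset.mem_range, List.length_append]
  by_cases hi : i < x.length
  · constructor
    · rintro ⟨-, hu, hg⟩
      left
      refine ⟨hi, ?_, ?_⟩
      · rwa [List.getD_append _ _ _ _ hi] at hu
      · rwa [take_append_count, take_append_count, Nat.sub_eq_zero_of_le hi.le,
          List.take_zero, List.count_nil] at hg
    · rintro (⟨-, hu, hg⟩ | ⟨j, ⟨hj, _, _⟩, rfl⟩)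
      · refine ⟨by omega, ?_, ?_⟩
        · rwa [List.getD_append _ _ _ _ hi]
        · rwa [take_append_count, take_append_count, Nat.sub_eq_zero_of_le hi.le,
            List.take_zero, List.count_nil]
      · omega
  · push_neg at hi
    have htx : x.take i = x := List.take_of_length_le hi
    constructor
    · rintro ⟨hlen, hu, hg⟩
      right
      refine ⟨i - x.length, ⟨by omega, ?_, ?_⟩, by omega⟩
      · rwa [List.getD_append_right _ _ _ _ hi] at hu
      · rw [take_append_count, take_append_count, htx, hx] at hg
        omega
    · rintro (⟨h1, -, -⟩ | ⟨j, ⟨hj, hu, hg⟩, rfl⟩)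
      · omega
      · refine ⟨by omega, ?_, ?_⟩
        · rw [List.getD_append_right _ _ _ _ (by omega)]
          simpa using hu
        · rw [take_append_count, take_append_count, htx, hx]
          have : j + x.length - x.length = j := by omega
          rw [this]
          omega

lemma card_up_append (x y : List Bool) (hx : x.count true = x.count false) :
    (upStepsNotAtGround (x ++ y)).card
      = (upStepsNotAtGround x).card + (upStepsNotAtGround y).card := by
  rw [up_append x y hx, Finset.card_union_of_disjoint, Finset.card_image_of_injective _
    (add_left_injective _)]
  · rw [Finset.disjoint_left]
    intro i hi hj
    simp only [upStepsNotAtGround, Finset.mem_filter, Finset.mem_range] at hi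
    simp only [Finset.mem_image] at hj
    obtain ⟨j, -, rfl⟩ := hj
    omega

lemma up_arch (w1 : List Bool) (h : ∀ i, (w1.take i).count false ≤ (w1.take i).count true) :
    (upStepsNotAtGround (true :: w1 ++ [false])).card = w1.count true := by
  have hset : upStepsNotAtGround (true :: w1 ++ [false])
      = ((Finset.range w1.length).filter (fun i => w1.getD i false = true)).image (· + 1) := by
    ext i
    simp only [upStepsNotAtGround, Finset.mem_filter, Finset.mem_range, Finset.mem_image,
      List.length_append, List.length_cons, List.length_singleton, List.length_nil]
    constructor
    · rintro ⟨hlen, hu, hg⟩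
      match i with
      | 0 => simp at hg
      | (j+1) =>
        rw [List.cons_append, List.getD_cons_succ] at hu
        by_cases hj : j < w1.length
        · exact ⟨j, ⟨hj, by rwa [List.getD_append _ _ _ _ hj] at hu⟩, rfl⟩
        · exfalso
          have hj' : j = w1.length := by omega
          subst hj'
          rw [List.getD_append_right _ _ _ _ le_rfl] at hu
          simp at hu
    · rintro ⟨j, ⟨hj, hu⟩, rfl⟩
      refine ⟨by omega, ?_, ?_⟩
      · rw [List.cons_append, List.getD_cons_succ, List.getD_append _ _ _ _ hj]
        exact hu
      · rw [List.cons_append, List.take_succ_cons, List.take_append,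
          Nat.sub_eq_zero_of_le hj.le, List.take_zero, List.append_nil]
        have := h j
        simp only [List.count_cons]
        simp
        omega
  rw [hset, Finset.card_image_of_injective _ (add_left_injective _), card_upPos]

lemma isDyck_compose {m1 m2 : ℕ} {w1 w2 : List Bool} (h1 : IsDyckWord m1 w1)
    (h2 : IsDyckWord m2 w2) : IsDyckWord (m1 + m2 + 1) (true :: w1 ++ false :: w2) := by
  obtain ⟨hl1, hct1, hcf1, hp1⟩ := h1
  obtain ⟨hl2, hct2, hcf2, hp2⟩ := h2
  refine ⟨by simp [hl1, hl2]; omega, by simp [hct1, hct2]; try omega, by simp [hcf1, hcf2]; try omega, ?_⟩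
  intro i
  match i with
  | 0 => simp
  | (j+1) =>
    rw [List.cons_append, List.take_succ_cons, List.count_cons, List.count_cons,
      take_append_count, take_append_count]
    by_cases hj : j ≤ w1.length
    · rw [Nat.sub_eq_zero_of_le hj, List.take_zero]
      have := hp1 j
      simp only [List.count_nil]
      simp
      omega
    · push_neg at hj
      obtain ⟨t, ht⟩ : ∃ t, j - w1.length = t + 1 := ⟨j - w1.length - 1, by omega⟩
      rw [ht, List.take_succ_cons, List.count_cons, List.count_cons,
        List.take_of_length_le (by omega), hct1, hcf1]
      have := hp2 t
      simp
      omega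

lemma count_tf (l : List Bool) : l.count true + l.count false = l.length := by
  induction l with
  | nil => simp
  | cons a l ih => cases a <;> simp [List.count_cons] <;> omega

/-- first return time -/
noncomputable def fr (w : List Bool) : ℕ :=
  sInf {i | 0 < i ∧ i ≤ w.length ∧ (w.take i).count true = (w.take i).count false}

noncomputable def d1 (w : List Bool) : List Bool := (w.drop 1).take (fr w - 2)
noncomputable def d2 (w : List Bool) : List Bool := w.drop (fr w)

lemma head_true {m : ℕ} {w : List Bool} (h : IsDyckWord m w) (hm : 0 < m) :
    w = true :: w.drop 1 := by
  obtain ⟨hl, -, -, hp⟩ := h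
  match w with
  | [] => simp at hl; omega
  | (a :: t) =>
    cases a
    · have := hp 1
      simp [List.take_succ_cons] at this
    · simp

lemma decompose {m : ℕ} {w : List Bool} (h : IsDyckWord m w) (hm : 0 < m) :
    ∃ m1 m2, m = m1 + m2 + 1 ∧ IsDyckWord m1 (d1 w) ∧ IsDyckWord m2 (d2 w) ∧
      w = true :: d1 w ++ false :: d2 w := by
  obtain ⟨hl, hct, hcf, hp⟩ := h
  have hne : {i | 0 < i ∧ i ≤ w.length ∧
      (w.take i).count true = (w.take i).count false}.Nonempty := by
    refine ⟨w.length, by omega, le_rfl, ?_⟩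
    rw [List.take_length, hct, hcf]
  have hS := Nat.sInf_mem hne
  have hr0 : 0 < fr w := hS.1
  have hrle : fr w ≤ w.length := hS.2.1
  have hrbal : (w.take (fr w)).count true = (w.take (fr w)).count false := hS.2.2
  have hmin : ∀ j, 0 < j → j < fr w →
      (w.take j).count false < (w.take j).count true := by
    intro j hj0 hjr
    have hnm : j ∉ {i | 0 < i ∧ i ≤ w.length ∧
        (w.take i).count true = (w.take i).count false} :=
      Nat.notMem_of_lt_sInf hjr
    simp only [Set.mem_setOf_eq, not_and] at hnm
    have h1 := hp j
    by_cases hb : (w.take j).count true = (w.take j).count false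
    · exact absurd hb (hnm hj0 (by omega))
    · omega
  have hw : w = true :: w.drop 1 := head_true ⟨hl, hct, hcf, hp⟩ hm
  have hr2 : 2 ≤ fr w := by
    by_contra hlt2
    have hr1 : fr w = 1 := by omega
    rw [hr1] at hrbal
    conv at hrbal => rw [hw]
    simp [List.take_succ_cons] at hrbal
  obtain ⟨q, hq⟩ : ∃ q, fr w = q + 2 := ⟨fr w - 2, by omega⟩
  set t := w.drop 1 with htdef
  have hlt : t.length + 1 = w.length := by
    conv_rhs => rw [hw]
    simp
  have hqlen : q < t.length := by omega
  -- the step at position q+1 of w is a down step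
  have hb : t.getD q false = false := by
    by_contra hbt
    rw [Bool.not_eq_false] at hbt
    have htk : w.take (fr w) = w.take (q+1) ++ [t.getD q false] := by
      rw [hq]
      conv_lhs => rw [hw]
      conv_rhs => rw [hw]
      rw [show (q:ℕ) + 2 = (q+1)+1 from rfl, List.take_succ_cons, List.take_succ_cons,
        List.take_succ, List.getElem?_eq_getElem hqlen, List.getD_eq_getElem _ _ hqlen]
      simp
    have h1 : (w.take (fr w)).count true = (w.take (q+1)).count true + 1 := by
      rw [htk, List.count_append, hbt]; simp
    have h2 : (w.take (fr w)).count false = (w.take (q+1)).count false := by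
      rw [htk, List.count_append, hbt]; simp
    have := hmin (q+1) (by omega) (by omega)
    omega
  -- list-level facts
  have hd1 : d1 w = t.take q := by rw [d1, hq, ← htdef]; simp
  have hd2 : d2 w = t.drop (q+1) := by
    rw [d2, hq]
    conv_lhs => rw [hw]
    rw [show (q:ℕ) + 2 = (q+1) + 1 from rfl, List.drop_succ_cons]
  have hsplitt : t = t.take q ++ false :: t.drop (q+1) := by
    conv_lhs => rw [← List.take_append_drop q t]
    congr 1
    rw [← hb, List.getD_eq_getElem _ _ hqlen]
    exact (List.getElem_cons_drop hqlen).symm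
  have hweq : w = true :: d1 w ++ false :: d2 w := by
    rw [hd1, hd2]
    calc w = true :: t := hw
      _ = true :: (t.take q ++ false :: t.drop (q+1)) := by rw [← hsplitt]
      _ = true :: t.take q ++ false :: t.drop (q+1) := by simp
  -- the first block of length fr w
  have htkfr : w.take (fr w) = true :: (t.take q ++ [false]) := by
    rw [hq]
    conv_lhs => rw [hw]
    rw [show (q:ℕ) + 2 = (q+1)+1 from rfl, List.take_succ_cons, List.take_succ,
      List.getElem?_eq_getElem hqlen]
    rw [← hb, List.getD_eq_getElem _ _ hqlen]
    simp
  have hlen1 : (t.take q).length = q := by rw [List.length_take]; omega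
  -- counts in first block
  have hcnt1 : (w.take (fr w)).count true = (t.take q).count true + 1 := by
    rw [htkfr]; simp [List.count_cons, List.count_append]
  have hcnt2 : (w.take (fr w)).count false = (t.take q).count false + 1 := by
    rw [htkfr]; simp [List.count_cons, List.count_append]
  have hbal1 : (t.take q).count true = (t.take q).count false := by omega
  have hqeven : q = 2 * ((t.take q).count true) := by
    have := count_tf (t.take q)
    omega
  -- counts in second block
  have hwsplit : w = w.take (fr w) ++ d2 w := by
    rw [d2]
    exact (List.take_append_drop (fr w) w).symm
  have hcntw : ∀ b : Bool, w.count b = (w.take (fr w)).count b + (d2 w).count b := by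
    intro b
    conv_lhs => rw [hwsplit]
    rw [List.count_append]
  have hlend2 : (d2 w).length = w.length - fr w := by rw [d2, List.length_drop]
  -- prefix conditions
  have hpre1 : ∀ j, ((t.take q).take j).count false ≤ ((t.take q).take j).count true := by
    intro j
    rw [List.take_take]
    have hj' : min j q ≤ q := min_le_right _ _
    have hstep := hmin (min j q + 1) (by omega) (by omega)
    have htj : w.take (min j q + 1) = true :: t.take (min j q) := by
      conv_lhs => rw [hw]
      rw [List.take_succ_cons]
    rw [htj] at hstep
    simp [List.count_cons] at hstep
    omega
  have hpre2 : ∀ j, ((d2 w).take j).count false ≤ ((d2 w).take j).count true := by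
    intro j
    have hstep := hp (fr w + j)
    have : w.take (fr w + j) = w.take (fr w) ++ (d2 w).take j := by
      rw [List.take_add, d2]
    rw [this, List.count_append, List.count_append] at hstep
    omega
  set m1 := (t.take q).count true with hm1
  refine ⟨m1, m - m1 - 1, by omega, ?_, ⟨?_, ?_, ?_, hpre2⟩, hweq⟩
  · rw [hd1]
    exact ⟨by omega, by omega, by omega, hpre1⟩
  · rw [hlend2]; omega
  · have := hcntw true
    omega
  · have := hcntw false
    omega

lemma fr_compose {w1 w2 : List Bool} (hbal : w1.count true = w1.count false)
    (hpre : ∀ i, (w1.take i).count false ≤ (w1.take i).count true) :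
    fr (true :: w1 ++ false :: w2) = w1.length + 2 := by
  set w := true :: w1 ++ false :: w2 with hwdef
  have hlen : w.length = w1.length + w2.length + 2 := by simp [hwdef]; omega
  have htk : w.take (w1.length + 2) = true :: w1 ++ [false] := by
    rw [hwdef, show w1.length + 2 = (w1.length + 1) + 1 from rfl, List.cons_append,
      List.take_succ_cons, List.take_succ, List.take_append,
      List.take_of_length_le le_rfl, Nat.sub_self, List.take_zero]
    simp
  have hmem : w1.length + 2 ∈ {i | 0 < i ∧ i ≤ w.length ∧
      (w.take i).count true = (w.take i).count false} := by
    refine ⟨by omega, by omega, ?_⟩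
    rw [htk]
    simp [List.count_append, List.count_cons, hbal]
  have hub := Nat.sInf_le hmem
  rcases Nat.lt_or_ge (fr w) (w1.length + 2) with hlt | hge
  · exfalso
    have hS := Nat.sInf_mem ⟨_, hmem⟩
    have hr0 : 0 < fr w := hS.1
    have hrbal : (w.take (fr w)).count true = (w.take (fr w)).count false := hS.2.2
    obtain ⟨j, hj⟩ : ∃ j, fr w = j + 1 := ⟨fr w - 1, by omega⟩
    have hjle : j ≤ w1.length := by omega
    have : w.take (fr w) = true :: w1.take j := by
      rw [hj, hwdef, List.cons_append, List.take_succ_cons,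
        List.take_append, Nat.sub_eq_zero_of_le hjle, List.take_zero,
        List.append_nil]
    rw [this] at hrbal
    have := hpre j
    simp [List.count_cons] at hrbal
    omega
  · exact le_antisymm hub hge

lemma d1_compose {w1 w2 : List Bool} (hbal : w1.count true = w1.count false)
    (hpre : ∀ i, (w1.take i).count false ≤ (w1.take i).count true) :
    d1 (true :: w1 ++ false :: w2) = w1 := by
  rw [d1, fr_compose hbal hpre]
  simp [List.take_left]

lemma d2_compose {w1 w2 : List Bool} (hbal : w1.count true = w1.count false)
    (hpre : ∀ i, (w1.take i).count false ≤ (w1.take i).count true) :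
    d2 (true :: w1 ++ false :: w2) = w2 := by
  rw [d2, fr_compose hbal hpre, show w1.length + 2 = (w1.length + 1) + 1 from rfl,
    List.cons_append, List.drop_succ_cons, List.drop_append, List.drop_eq_nil_of_le (by omega),
    Nat.add_sub_cancel_left, List.drop_succ_cons, List.drop_zero, List.nil_append]

lemma isDyck_zero {w : List Bool} (h : IsDyckWord 0 w) : w = [] := by
  have := h.1
  simpa [List.length_eq_zero_iff] using this

lemma ung_compose {m1 m2 : ℕ} {w1 w2 : List Bool} (h1 : IsDyckWord m1 w1)
    (h2 : IsDyckWord m2 w2) :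
    (upStepsNotAtGround (true :: w1 ++ false :: w2)).card
      = m1 + (upStepsNotAtGround w2).card := by
  have hsplit : true :: w1 ++ false :: w2 = (true :: w1 ++ [false]) ++ w2 := by simp
  rw [hsplit, card_up_append _ _ (by simp [List.count_cons, List.count_append, h1.2.1,
    h1.2.2.1]), up_arch w1 h1.2.2.2, h1.2.1]

lemma head_getD {m : ℕ} {w : List Bool} (h : IsDyckWord m w) (hm : 0 < m) :
    w.getD 0 false = true := by
  conv_lhs => rw [head_true h hm]
  rfl

lemma ung_le {m : ℕ} {w : List Bool} (h : IsDyckWord m w) (hm : 0 < m) :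
    (upStepsNotAtGround w).card + 1 ≤ m := by
  have hsub : upStepsNotAtGround w ⊆
      ((Finset.range w.length).filter (fun i => w.getD i false = true)).erase 0 := by
    intro i hi
    simp only [upStepsNotAtGround, Finset.mem_filter, Finset.mem_range] at hi
    rw [Finset.mem_erase]
    refine ⟨?_, by simp only [Finset.mem_filter, Finset.mem_range]; exact ⟨hi.1, hi.2.1⟩⟩
    rintro rfl
    simp at hi
  have h0 : 0 ∈ (Finset.range w.length).filter (fun i => w.getD i false = true) := by
    simp only [Finset.mem_filter, Finset.mem_range]
    exact ⟨by rw [h.1]; omega, head_getD h hm⟩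
  have hcard := Finset.card_le_card hsub
  rw [Finset.card_erase_of_mem h0, card_upPos, h.2.1] at hcard
  omega

open scoped Classical in
noncomputable def dyckFinset (m : ℕ) : Finset (List Bool) :=
  ((Finset.univ : Finset (List.Vector Bool (2*m))).image Subtype.val).filter
    (fun w => IsDyckWord m w)

lemma mem_dyckFinset {m : ℕ} {w : List Bool} : w ∈ dyckFinset m ↔ IsDyckWord m w := by
  classical
  simp only [dyckFinset, Finset.mem_filter, Finset.mem_image, Finset.mem_univ, true_and]
  constructor
  · exact fun h => by
      convert h.2
  · intro h
    exact ⟨Finset.mem_image_of_mem Subtype.val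
      (Finset.mem_univ (α := List.Vector Bool (2*m)) ⟨w, h.1⟩), h⟩

open scoped Classical in
noncomputable def Mc (m s : ℕ) : ℕ :=
  ((dyckFinset m).filter (fun w => (upStepsNotAtGround w).card = s)).card
lemma bal_of {m : ℕ} {w : List Bool} (h : IsDyckWord m w) :
    w.count true = w.count false := by rw [h.2.1, h.2.2.1]

lemma isDyck_nil : IsDyckWord 0 [] := ⟨rfl, rfl, rfl, fun i => by simp⟩

lemma ung_cast {m : ℕ} {w : List Bool} (h : IsDyckWord m w) :
    True := trivial

open scoped Classical in
lemma Mc_A (m s : ℕ) :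
    ((dyckFinset (m+1)).filter (fun w => (upStepsNotAtGround w).card = s ∧ d1 w = [])).card
      = Mc m s := by
  classical
  rw [Mc]
  apply Finset.card_bij' (fun w _ => d2 w) (fun Q _ => true :: false :: Q)
  · -- maps into target
    intro w hw
    simp only [Finset.mem_filter, mem_dyckFinset] at hw ⊢
    obtain ⟨hD, hu, hnil⟩ := hw
    obtain ⟨m1, m2, hmeq, hD1, hD2, hWeq⟩ := decompose hD (by omega)
    rw [hnil] at hD1 hWeq
    have hm1 : m1 = 0 := by have := hD1.1; simpa using this
    rw [hm1] at hmeq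
    refine ⟨by rw [show m = m2 by omega]; exact hD2, ?_⟩
    rw [hWeq, ung_compose isDyck_nil hD2] at hu
    omega
  · -- reverse maps into source
    intro Q hQ
    simp only [Finset.mem_filter, mem_dyckFinset] at hQ ⊢
    obtain ⟨hD, hu⟩ := hQ
    have hcomp : IsDyckWord (0 + m + 1) (true :: ([] : List Bool) ++ false :: Q) :=
      isDyck_compose isDyck_nil hD
    simp only [List.nil_append, List.cons_append] at hcomp
    refine ⟨by rw [show m + 1 = 0 + m + 1 by omega]; exact hcomp, ?_, ?_⟩
    · have := ung_compose (w2 := Q) isDyck_nil hD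
      simp only [List.nil_append, List.cons_append] at this
      rw [this, hu]
      omega
    · have := d1_compose (w1 := []) (w2 := Q) rfl (fun i => by simp)
      simpa using this
  · -- left inverse
    intro w hw
    simp only [Finset.mem_filter, mem_dyckFinset] at hw
    obtain ⟨hD, hu, hnil⟩ := hw
    obtain ⟨m1, m2, hmeq, hD1, hD2, hWeq⟩ := decompose hD (by omega)
    rw [hnil] at hWeq
    simpa using hWeq.symm
  · -- right inverse
    intro Q hQ
    have := d2_compose (w1 := []) (w2 := Q) rfl (fun i => by simp)
    simpa using this

lemma Mc_zero : ∀ m, Mc m 0 = 1 := by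
  intro m
  induction m with
  | zero =>
    classical
    rw [Mc]
    have h1 : dyckFinset 0 = {([] : List Bool)} := by
      ext w
      rw [mem_dyckFinset, Finset.mem_singleton]
      exact ⟨fun h => isDyck_zero h, fun h => h ▸ isDyck_nil⟩
    rw [h1]
    rw [Finset.filter_singleton, if_pos (by simp [upStepsNotAtGround])]
    rfl
  | succ m ih =>
    classical
    have heq : Mc (m+1) 0 = ((dyckFinset (m+1)).filter
        (fun w => (upStepsNotAtGround w).card = 0 ∧ d1 w = [])).card := by
      rw [Mc]
      congr 1
      apply Finset.filter_congr
      intro w hw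
      rw [mem_dyckFinset] at hw
      refine ⟨fun hu => ⟨hu, ?_⟩, fun h => h.1⟩
      obtain ⟨m1, m2, hmeq, hD1, hD2, hWeq⟩ := decompose hw (by omega)
      rw [hWeq, ung_compose hD1 hD2] at hu
      have : m1 = 0 := by omega
      rw [this] at hD1
      exact isDyck_zero hD1
    rw [heq, Mc_A m 0, ih]
open scoped Classical in
lemma Mc_B (m s : ℕ) (hs1 : 1 ≤ s) (hsm : s ≤ m) :
    ((dyckFinset (m+1)).filter
        (fun w => (upStepsNotAtGround w).card = s ∧ d1 w ≠ [])).card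
      = Mc (m+1) (s-1) := by
  classical
  rw [Mc]
  apply Finset.card_bij'
    (fun w _ => true :: d1 (d1 w) ++ false :: (true :: d2 (d1 w) ++ false :: d2 w))
    (fun v _ => true :: (true :: d1 v ++ false :: d1 (d2 v)) ++ false :: d2 (d2 v))
  · -- forward map lands in target
    intro w hw
    simp only [Finset.mem_filter, mem_dyckFinset] at hw ⊢
    obtain ⟨hD, hu, hnil⟩ := hw
    obtain ⟨m1, m2, hmeq, hD1, hD2, hWeq⟩ := decompose hD (by omega)
    have hm1 : 0 < m1 := by
      rcases Nat.eq_zero_or_pos m1 with h0 | h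
      · rw [h0] at hD1; exact absurd (isDyck_zero hD1) hnil
      · exact h
    obtain ⟨p, q, hpq, hA, hB, hAeq⟩ := decompose hD1 hm1
    have hinner : IsDyckWord (q + m2 + 1) (true :: d2 (d1 w) ++ false :: d2 w) :=
      isDyck_compose hB hD2
    have houter := isDyck_compose hA hinner
    constructor
    · rw [show m + 1 = p + (q + m2 + 1) + 1 by omega]
      exact houter
    · rw [ung_compose hA hinner, ung_compose hB hD2]
      rw [hWeq, ung_compose hD1 hD2] at hu
      omega
  · -- backward map lands in source
    intro v hv
    simp only [Finset.mem_filter, mem_dyckFinset] at hv ⊢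
    obtain ⟨hD, hu⟩ := hv
    obtain ⟨m1, m2, hmeq, hD1, hD2, hWeq⟩ := decompose hD (by omega)
    have hm2 : 0 < m2 := by
      rcases Nat.eq_zero_or_pos m2 with h0 | h
      · exfalso
        rw [h0] at hD2
        have hnil2 := isDyck_zero hD2
        rw [hWeq, ung_compose hD1 hD2, hnil2] at hu
        simp [upStepsNotAtGround] at hu
        omega
      · exact h
    obtain ⟨p, q, hpq, hA, hB, hAeq⟩ := decompose hD2 hm2
    have hleft : IsDyckWord (m1 + p + 1) (true :: d1 v ++ false :: d1 (d2 v)) :=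
      isDyck_compose hD1 hA
    have houter := isDyck_compose hleft hB
    refine ⟨?_, ?_, ?_⟩
    · rw [show m + 1 = (m1 + p + 1) + q + 1 by omega]
      exact houter
    · rw [ung_compose hleft hB]
      rw [hWeq, ung_compose hD1 hD2, hAeq, ung_compose hA hB] at hu
      omega
    · have h3 := d1_compose (w1 := true :: d1 v ++ false :: d1 (d2 v))
        (w2 := d2 (d2 v)) (bal_of hleft) hleft.2.2.2
      simp only [List.cons_append, List.append_assoc] at h3 ⊢
      simp [h3]
  · -- left inverse
    intro w hw
    simp only [Finset.mem_filter, mem_dyckFinset] at hw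
    obtain ⟨hD, hu, hnil⟩ := hw
    obtain ⟨m1, m2, hmeq, hD1, hD2, hWeq⟩ := decompose hD (by omega)
    have hm1 : 0 < m1 := by
      rcases Nat.eq_zero_or_pos m1 with h0 | h
      · rw [h0] at hD1; exact absurd (isDyck_zero hD1) hnil
      · exact h
    obtain ⟨p, q, hpq, hA, hB, hAeq⟩ := decompose hD1 hm1
    have hinner : IsDyckWord (q + m2 + 1) (true :: d2 (d1 w) ++ false :: d2 w) :=
      isDyck_compose hB hD2
    rw [d1_compose (bal_of hA) hA.2.2.2, d2_compose (bal_of hA) hA.2.2.2,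
      d1_compose (bal_of hB) hB.2.2.2, d2_compose (bal_of hB) hB.2.2.2, ← hAeq, ← hWeq]
  · -- right inverse
    intro v hv
    simp only [Finset.mem_filter, mem_dyckFinset] at hv
    obtain ⟨hD, hu⟩ := hv
    obtain ⟨m1, m2, hmeq, hD1, hD2, hWeq⟩ := decompose hD (by omega)
    have hm2 : 0 < m2 := by
      rcases Nat.eq_zero_or_pos m2 with h0 | h
      · exfalso
        rw [h0] at hD2
        have hnil2 := isDyck_zero hD2
        rw [hWeq, ung_compose hD1 hD2, hnil2] at hu
        simp [upStepsNotAtGround] at hu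
        omega
      · exact h
    obtain ⟨p, q, hpq, hA, hB, hAeq⟩ := decompose hD2 hm2
    have hleft : IsDyckWord (m1 + p + 1) (true :: d1 v ++ false :: d1 (d2 v)) :=
      isDyck_compose hD1 hA
    rw [d1_compose (bal_of hleft) hleft.2.2.2, d2_compose (bal_of hleft) hleft.2.2.2,
      d1_compose (bal_of hD1) hD1.2.2.2, d2_compose (bal_of hD1) hD1.2.2.2, ← hAeq, ← hWeq]

open scoped Classical in
lemma Mc_rec (m s : ℕ) (hs1 : 1 ≤ s) (hsm : s ≤ m) :
    Mc (m+1) s = Mc m s + Mc (m+1) (s-1) := by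
  classical
  rw [Mc]
  rw [← Finset.card_filter_add_card_filter_not (p := fun w => d1 w = [])
    (s := (dyckFinset (m+1)).filter (fun w => (upStepsNotAtGround w).card = s))]
  congr 1
  · rw [← Mc_A m s, Finset.filter_filter]
  · rw [← Mc_B m s hs1 hsm, Finset.filter_filter]
lemma catTri_zero (n : ℕ) : catalanTriangle n 0 = 1 := by
  rw [catalanTriangle]
  simp [Nat.choose_self, Nat.div_self (Nat.succ_pos n)]

lemma choose_ratio (n k : ℕ) (hk : 1 ≤ k) :
    (n + k).choose k * k = (n + k).choose (k - 1) * (n + 1) := by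
  have h := Nat.choose_succ_right_eq (n + k) (k - 1)
  rw [show k - 1 + 1 = k from by omega, show n + k - (k - 1) = n + 1 from by omega] at h
  exact h

lemma catTri_mul {n k : ℕ} (hk : k ≤ n) :
    catalanTriangle n k * (n + 1) = (n + 1 - k) * (n + k).choose k := by
  rw [catalanTriangle, Nat.choose_symm_add]
  rcases Nat.eq_zero_or_pos k with rfl | hkpos
  · simp [Nat.choose_self]
  · set C := (n + k).choose k with hC
    set C' := (n + k).choose (k - 1) with hC'
    have hr : C * k = C' * (n + 1) := choose_ratio n k hkpos
    have hle : C' ≤ C := by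
      have h1 : C' * (n + 1) ≤ C * (n + 1) := by
        rw [← hr]
        exact Nat.mul_le_mul_left C (by omega)
      exact Nat.le_of_mul_le_mul_right h1 (Nat.succ_pos n)
    have h2 : (n - k + 1) = (n + 1) - k := by omega
    have hkey : (n - k + 1) * C = (n + 1) * (C - C') := by
      rw [Nat.mul_sub, Nat.mul_comm (n+1) C', ← hr, Nat.mul_comm C k, h2, Nat.sub_mul]
    rw [hkey, Nat.mul_div_cancel_left _ (Nat.succ_pos n),
      Nat.mul_comm (C - C') (n+1), ← hkey, h2]

lemma catTri_succ (n s : ℕ) (hc : s + 1 ≤ n) :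
    catalanTriangle (n+1) (s+1) = catalanTriangle n (s+1) + catalanTriangle (n+1) s := by
  have e1 := catTri_mul (n := n+1) (k := s+1) (by omega)
  have e2 := catTri_mul (n := n) (k := s+1) hc
  have e3 := catTri_mul (n := n+1) (k := s) (by omega)
  have hP : (n + s + 2).choose (s+1) = (n + s + 1).choose s + (n + s + 1).choose (s+1) :=
    Nat.choose_succ_succ (n + s + 1) s
  have hR : (n + s + 1).choose (s+1) * (s+1) = (n + s + 1).choose s * (n+1) := by
    have h := Nat.choose_succ_right_eq (n + s + 1) s
    rw [show n + s + 1 - s = n + 1 from by omega] at h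
    exact h
  apply Nat.eq_of_mul_eq_mul_right (show 0 < (n+1) * (n+2) by positivity)
  rw [show (n + 1 + (s+1)) = n + s + 2 from by omega] at e1
  rw [show (n + (s+1)) = n + s + 1 from by omega] at e2
  rw [show (n + 1 + s) = n + s + 1 from by omega] at e3
  zify [show s + 1 ≤ n + 2 from by omega, show s + 1 ≤ n + 1 from by omega,
    show s ≤ n + 2 from by omega] at e1 e2 e3 ⊢
  zify at hP hR
  linear_combination ((n:ℤ) + 1) * e1 - ((n:ℤ) + 2) * e2 - ((n:ℤ) + 1) * e3
    + (((n:ℤ) + 1) * ((n:ℤ) + 1 - (s:ℤ))) * hP + hR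
lemma catTri_top (n : ℕ) : catalanTriangle (n+1) (n+1) = catalanTriangle (n+1) n := by
  have e1 := catTri_mul (n := n+1) (k := n+1) le_rfl
  have e3 := catTri_mul (n := n+1) (k := n) (by omega)
  rw [show n + 1 + 1 - (n+1) = 1 from by omega] at e1
  rw [show n + 1 + 1 - n = 2 from by omega] at e3
  have hP : (n + 1 + (n+1)).choose (n+1) = (n + n + 1).choose n + (n + n + 1).choose (n+1) := by
    rw [show n + 1 + (n+1) = (n + n + 1) + 1 from by omega]
    exact Nat.choose_succ_succ (n + n + 1) n
  have hsym : (n + n + 1).choose (n+1) = (n + n + 1).choose n := by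
    rw [show n + n + 1 = n + (n + 1) from by omega]
    exact (Nat.choose_symm_add (a := n) (b := n+1)).symm
  rw [show n + 1 + n = n + n + 1 from by omega] at e3
  apply Nat.eq_of_mul_eq_mul_right (show 0 < n + 2 by omega)
  calc catalanTriangle (n+1) (n+1) * (n+2)
      = 1 * ((n + 1 + (n+1)).choose (n+1)) := e1
    _ = (n+n+1).choose n + (n+n+1).choose (n+1) := by rw [one_mul, hP]
    _ = 2 * ((n+n+1).choose n) := by rw [hsym]; ring
    _ = catalanTriangle (n+1) n * (n+2) := e3.symm

lemma Mc_top (m s : ℕ) (hm : 0 < m) (hms : m ≤ s) : Mc m s = 0 := by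
  classical
  rw [Mc, Finset.card_eq_zero, Finset.filter_eq_empty_iff]
  intro w hw
  rw [mem_dyckFinset] at hw
  have := ung_le hw hm
  omega

lemma Mc_eq : ∀ n s, s ≤ n → Mc (n+1) s = catalanTriangle n s := by
  intro n
  induction n with
  | zero =>
    intro s hs
    interval_cases s
    rw [Mc_zero, catTri_zero]
  | succ n ih =>
    intro s
    induction s with
    | zero => intro _; rw [Mc_zero, catTri_zero]
    | succ s ihs =>
      intro hs
      have h2 : Mc (n+1+1) s = catalanTriangle (n+1) s := ihs (by omega)
      have hrec := Mc_rec (n+1) (s+1) (by omega) (by omega)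
      simp only [Nat.add_sub_cancel] at hrec
      by_cases hc : s + 1 ≤ n
      · rw [hrec, ih (s+1) hc, h2, catTri_succ n s hc]
      · have hsn : s = n := by omega
        subst hsn
        rw [hrec, Mc_top (s+1) (s+1) (by omega) le_rfl, h2, zero_add, catTri_top]
/-- The number of pairs `(D, S)` with `D` a Dyck word of semi-length `n+1` and `S` a set of
`k` up-steps of `D`, none at ground level, equals `B_{n,k}`. -/
theorem card_markedDyckWords (n k : ℕ) (hk : k ≤ n) :
    Nat.card {p : List Bool × Finset ℕ // IsDyckWord (n + 1) p.1 ∧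
        p.2 ⊆ upStepsNotAtGround p.1 ∧ p.2.card = k}
      = borelTriangle n k := by
  classical
  set pairs := (dyckFinset (n+1)).biUnion
    (fun w => ((upStepsNotAtGround w).powersetCard k).image (fun t => (w, t))) with hpairs
  have hset : {p : List Bool × Finset ℕ | IsDyckWord (n + 1) p.1 ∧
      p.2 ⊆ upStepsNotAtGround p.1 ∧ p.2.card = k} = ↑pairs := by
    ext ⟨w, t⟩
    simp only [Set.mem_setOf_eq, Finset.mem_coe, hpairs, Finset.mem_biUnion,
      Finset.mem_image, Finset.mem_powersetCard, mem_dyckFinset]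
    constructor
    · rintro ⟨h1, h2, h3⟩
      exact ⟨w, h1, t, ⟨h2, h3⟩, rfl⟩
    · rintro ⟨w', hw', t', ⟨hsub, hcard⟩, heq⟩
      rw [Prod.mk.injEq] at heq
      obtain ⟨rfl, rfl⟩ := heq
      exact ⟨hw', hsub, hcard⟩
  have h1 : Nat.card {p : List Bool × Finset ℕ // IsDyckWord (n + 1) p.1 ∧
      p.2 ⊆ upStepsNotAtGround p.1 ∧ p.2.card = k} = pairs.card := by
    rw [← Set.ncard_coe_finset, ← hset]
    exact Nat.card_coe_set_eq _
  rw [h1]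
  have h2 : pairs.card = ∑ w ∈ dyckFinset (n+1), ((upStepsNotAtGround w).card).choose k := by
    rw [hpairs, Finset.card_biUnion]
    · apply Finset.sum_congr rfl
      intro w hw
      rw [Finset.card_image_of_injective _ (fun a b hab => by
        rw [Prod.mk.injEq] at hab; exact hab.2), Finset.card_powersetCard]
    · intro x hx y hy hxy
      rw [Function.onFun, Finset.disjoint_left]
      rintro p hp hq
      simp only [Finset.mem_image] at hp hq
      obtain ⟨t1, -, rfl⟩ := hp
      obtain ⟨t2, -, h2⟩ := hq
      rw [Prod.mk.injEq] at h2
      exact hxy h2.1.symm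
  rw [h2]
  have h3 : ∑ w ∈ dyckFinset (n+1), ((upStepsNotAtGround w).card).choose k
      = ∑ j ∈ Finset.range (n+1), j.choose k * Mc (n+1) j := by
    rw [← Finset.sum_fiberwise_of_maps_to
      (g := fun w => (upStepsNotAtGround w).card) (t := Finset.range (n+1)) (fun w hw => by
        simp only [Finset.mem_range]
        show (upStepsNotAtGround w).card < n + 1
        have := ung_le (mem_dyckFinset.1 hw) (by omega)
        omega)]
    apply Finset.sum_congr rfl
    intro j hj
    rw [Finset.sum_congr rfl (fun w hw => by rw [(Finset.mem_filter.1 hw).2]), Mc,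
      Finset.sum_const, smul_eq_mul, Nat.mul_comm]
  have hsub : Finset.Icc k n ⊆ Finset.range (n+1) := by
    intro j hj
    rw [Finset.mem_Icc] at hj
    rw [Finset.mem_range]
    omega
  have h4 : ∑ s ∈ Finset.Icc k n, s.choose k * catalanTriangle n s
      = ∑ s ∈ Finset.Icc k n, s.choose k * Mc (n+1) s := by
    apply Finset.sum_congr rfl
    intro j hj
    rw [Mc_eq n j (Finset.mem_Icc.1 hj).2]
  rw [h3, borelTriangle, h4]
  symm
  apply Finset.sum_subset hsub
  intro j hj hnot
  rw [Finset.mem_range] at hj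
  rw [Finset.mem_Icc] at hnot
  have hjk : j < k := by omega
  rw [Nat.choose_eq_zero_of_lt hjk, Nat.zero_mul]
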